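/- For every natural number n ≥ 2, ∑_{l=1}^{n-1} csc(πl/n) = (2n/π)(γ + log(4n)) + (4/π)·∑_{l=0}^{n-1} ((2l+1)/(2n))·Ψ((2l+1)/(2n)), where Ψ is the digamma function and γ is the Euler–Mascheroni constant. -/

import Mathlib

open Real Finset

/-- The digamma function: the logarithmic derivative of the Gamma function. -/
noncomputable def digamma (x : ℝ) : ℝ := deriv (fun y => Real.log (Real.Gamma y)) x

open Filter Topology Set

lemma logGamma_diff {x : ℝ} (hx : 0 < x) :
    DifferentiableAt ℝ (fun y => Real.log (Real.Gamma y)) x := by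
  refine ((Real.differentiableAt_Gamma ?_).log (Real.Gamma_ne_zero ?_)) <;>
  exact fun m => ((neg_nonpos.mpr (Nat.cast_nonneg m)).trans_lt hx).ne'

lemma hasDerivAt_logGamma {x : ℝ} (hx : 0 < x) :
    HasDerivAt (fun y => Real.log (Real.Gamma y)) (digamma x) x :=
  (logGamma_diff hx).hasDerivAt

lemma digamma_rec {x : ℝ} (hx : 0 < x) : digamma (x + 1) = digamma x + 1 / x := by
  unfold digamma
  rw [← deriv_comp_add_const, one_div, ← Real.deriv_log,
    ← deriv_add (logGamma_diff hx) (Real.differentiableAt_log hx.ne')]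
  apply Filter.EventuallyEq.deriv_eq
  filter_upwards [eventually_gt_nhds hx] with y hy
  simp only [Real.Gamma_add_one hy.ne',
    Real.log_mul hy.ne' (Real.Gamma_pos_of_pos hy).ne', add_comm]
  rfl

lemma digamma_mono {a b : ℝ} (ha : 0 < a) (hab : a ≤ b) : digamma a ≤ digamma b := by
  rcases eq_or_lt_of_le hab with rfl | h
  · exact le_refl _
  have hb : 0 < b := ha.trans h
  exact le_trans
    (Real.convexOn_log_Gamma.deriv_le_slope (mem_Ioi.2 ha) (mem_Ioi.2 hb) h (logGamma_diff ha))
    (Real.convexOn_log_Gamma.slope_le_deriv (mem_Ioi.2 ha) (mem_Ioi.2 hb) h (logGamma_diff hb))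

lemma digamma_nat_add_one (m : ℕ) :
    digamma (m + 1) = -Real.eulerMascheroniConstant + harmonic m := by
  have h1 : (0:ℝ) < m + 1 := by positivity
  have := Real.deriv_Gamma_nat m
  unfold digamma
  rw [deriv.log (Real.differentiableAt_Gamma
      (fun k => ((neg_nonpos.mpr (Nat.cast_nonneg k)).trans_lt h1).ne'))
      (Real.Gamma_pos_of_pos h1).ne', this, Real.Gamma_nat_eq_factorial]
  exact mul_div_cancel_left₀ _ (by exact_mod_cast (Nat.factorial_pos m).ne')

lemma digamma_add_nat {x : ℝ} (hx : 0 < x) (N : ℕ) :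
    digamma (x + N) = digamma x + ∑ k ∈ range N, (x + k)⁻¹ := by
  induction N with
  | zero => simp
  | succ M ih =>
      have hxM : 0 < x + M := by positivity
      have : x + (↑(M + 1) : ℝ) = (x + M) + 1 := by push_cast; ring
      rw [this, digamma_rec hxM, ih, Finset.sum_range_succ, one_div]
      ring

lemma digamma_tendsto {x : ℝ} (hx0 : 0 < x) (hx1 : x ≤ 1) :
    Tendsto (fun N : ℕ => Real.log N - ∑ k ∈ range N, (x + k)⁻¹) atTop
      (𝓝 (digamma x)) := by
  rw [← tendsto_add_atTop_iff_nat 1]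
  set γ := Real.eulerMascheroniConstant
  have key : ∀ M : ℕ,
      digamma x + γ + Real.log (M + 1) - (harmonic (M + 1) : ℝ) ≤
        Real.log (↑(M + 1)) - ∑ k ∈ range (M + 1), (x + k)⁻¹ ∧
      Real.log (↑(M + 1)) - ∑ k ∈ range (M + 1), (x + k)⁻¹ ≤
        digamma x + γ + Real.log (M + 1) - (harmonic M : ℝ) := by
    intro M
    have h1 : digamma (x + ↑(M + 1)) = digamma x + ∑ k ∈ range (M + 1), (x + k)⁻¹ :=
      digamma_add_nat hx0 _
    have h2 : digamma ((M : ℝ) + 1) ≤ digamma (x + ↑(M + 1)) := by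
      apply digamma_mono (by positivity)
      push_cast; linarith
    have h3 : digamma (x + ↑(M + 1)) ≤ digamma ((↑(M + 1) : ℝ) + 1) := by
      apply digamma_mono (by positivity)
      push_cast; linarith
    rw [h1, digamma_nat_add_one] at h2 h3
    have hc : (↑(M + 1) : ℝ) = (M : ℝ) + 1 := by push_cast; ring
    constructor
    · rw [hc]; linarith
    · rw [hc]; linarith
  have hlo : Tendsto (fun M : ℕ => digamma x + γ + Real.log (M + 1) - (harmonic (M + 1) : ℝ))
      atTop (𝓝 (digamma x)) := by
    have h := Real.tendsto_harmonic_sub_log.comp (tendsto_add_atTop_nat 1)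
    have : Tendsto (fun M : ℕ => digamma x + γ - ((harmonic (M + 1) : ℝ) - Real.log (↑(M + 1))))
        atTop (𝓝 (digamma x + γ - γ)) := (tendsto_const_nhds.sub h)
    simp only [add_sub_cancel_right] at this
    refine this.congr fun M => ?_
    push_cast; ring
  have hhi : Tendsto (fun M : ℕ => digamma x + γ + Real.log (M + 1) - (harmonic M : ℝ))
      atTop (𝓝 (digamma x)) := by
    have h := Real.tendsto_harmonic_sub_log_add_one
    have : Tendsto (fun M : ℕ => digamma x + γ - ((harmonic M : ℝ) - Real.log ((M : ℝ) + 1)))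
        atTop (𝓝 (digamma x + γ - γ)) := (tendsto_const_nhds.sub h)
    simp only [add_sub_cancel_right] at this
    refine this.congr fun M => ?_
    ring
  exact tendsto_of_tendsto_of_tendsto_of_le_of_le hlo hhi
    (fun M => (key M).1) (fun M => (key M).2)

lemma odd_harmonic (M : ℕ) :
    ∑ j ∈ range M, (2 * (j : ℝ) + 1)⁻¹ = (harmonic (2 * M) : ℝ) - (harmonic M : ℝ) / 2 := by
  induction M with
  | zero => simp
  | succ m ih =>
      rw [Finset.sum_range_succ, ih, show 2 * (m + 1) = (2 * m + 1) + 1 by ring,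
        harmonic_succ, harmonic_succ, harmonic_succ]
      push_cast
      have h1 : (2 * (m:ℝ) + 1) ≠ 0 := by positivity
      have h2 : ((m:ℝ) + 1) ≠ 0 := by positivity
      field_simp
      ring

lemma double_sum_reindex {n N : ℕ} (hn : 0 < n) (f : ℕ → ℝ) :
    ∑ l ∈ range n, ∑ k ∈ range N, f (l + n * k) = ∑ j ∈ range (n * N), f j := by
  rw [← Finset.sum_product']
  refine Finset.sum_nbij' (fun x => x.1 + n * x.2) (fun j => (j % n, j / n)) ?_ ?_ ?_ ?_ ?_
  · rintro ⟨l, k⟩ hm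
    simp only [Finset.mem_product, Finset.mem_range] at hm
    simp only [Finset.mem_range]
    calc l + n * k < n + n * k := by omega
      _ = n * (k + 1) := by ring
      _ ≤ n * N := Nat.mul_le_mul_left n hm.2
  · intro j hj
    simp only [Finset.mem_range] at hj
    simp only [Finset.mem_product, Finset.mem_range]
    exact ⟨Nat.mod_lt _ hn, Nat.div_lt_of_lt_mul (by omega)⟩
  · rintro ⟨l, k⟩ hm
    simp only [Finset.mem_product, Finset.mem_range] at hm
    simp [Nat.add_mul_mod_self_left, Nat.mod_eq_of_lt hm.1, Nat.add_mul_div_left _ _ hn,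
      Nat.div_eq_of_lt hm.1]
  · intro j hj
    simp [Nat.mod_add_div]
  · rintro ⟨l, k⟩ hm
    rfl
open Real Finset Filter Topology Set

lemma gauss_digamma_sum (n : ℕ) (hn : 0 < n) :
    ∑ l ∈ range n, digamma ((2 * (l : ℝ) + 1) / (2 * n)) =
      -(n : ℝ) * (Real.eulerMascheroniConstant + Real.log (4 * n)) := by
  have hn' : (0:ℝ) < n := by exact_mod_cast hn
  set γ := Real.eulerMascheroniConstant
  set x : ℕ → ℝ := fun l => (2 * (l : ℝ) + 1) / (2 * n) with hx
  have hx0 : ∀ l, 0 < x l := fun l => by positivity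
  have hx1 : ∀ l ∈ range n, x l ≤ 1 := by
    intro l hl
    rw [Finset.mem_range] at hl
    rw [hx, div_le_one (by positivity)]
    have : (l:ℝ) + 1 ≤ n := by exact_mod_cast hl
    linarith
  -- limit of the sum of the digamma approximations
  have h1 : Tendsto (fun N : ℕ => ∑ l ∈ range n,
      (Real.log N - ∑ k ∈ range N, (x l + k)⁻¹)) atTop
      (𝓝 (∑ l ∈ range n, digamma (x l))) :=
    tendsto_finset_sum _ fun l hl => digamma_tendsto (hx0 l) (hx1 l hl)
  -- identify the approximating sums
  have h2 : ∀ N : ℕ, ∑ l ∈ range n, (Real.log N - ∑ k ∈ range N, (x l + k)⁻¹) =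
      (n:ℝ) * Real.log N - 2 * n * (harmonic (2 * (n * N)) : ℝ) + n * (harmonic (n * N) : ℝ) := by
    intro N
    rw [Finset.sum_sub_distrib, Finset.sum_const, Finset.card_range, nsmul_eq_mul]
    have key : ∑ l ∈ range n, ∑ k ∈ range N, (x l + k)⁻¹ =
        2 * n * ((harmonic (2 * (n * N)) : ℝ) - (harmonic (n * N) : ℝ) / 2) := by
      have hterm : ∀ l k : ℕ, (x l + k)⁻¹ = 2 * (n:ℝ) * (2 * ((l + n * k : ℕ) : ℝ) + 1)⁻¹ := by
        intro l k
        have h : x l + (k:ℝ) = (2 * ((l + n * k : ℕ) : ℝ) + 1) / (2 * n) := by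
          rw [hx]; push_cast; field_simp; ring
        rw [h, inv_div, div_eq_mul_inv]
      calc ∑ l ∈ range n, ∑ k ∈ range N, (x l + k)⁻¹
          = ∑ l ∈ range n, ∑ k ∈ range N, 2 * (n:ℝ) * (2 * ((l + n * k : ℕ) : ℝ) + 1)⁻¹ := by
            refine Finset.sum_congr rfl fun l _ => Finset.sum_congr rfl fun k _ => hterm l k
        _ = 2 * (n:ℝ) * ∑ l ∈ range n, ∑ k ∈ range N, (2 * ((l + n * k : ℕ) : ℝ) + 1)⁻¹ := by
            rw [Finset.mul_sum]
            exact Finset.sum_congr rfl fun l _ => by rw [Finset.mul_sum]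
        _ = 2 * (n:ℝ) * ∑ j ∈ range (n * N), (2 * (j : ℝ) + 1)⁻¹ := by
            rw [double_sum_reindex hn (fun j => (2 * (j:ℝ) + 1)⁻¹)]
        _ = 2 * n * ((harmonic (2 * (n * N)) : ℝ) - (harmonic (n * N) : ℝ) / 2) := by
            rw [odd_harmonic]
    rw [key]
    ring
  -- the limit of the explicit expression
  have haux : Tendsto (fun N : ℕ => 2 * (n * N)) atTop atTop := by
    apply tendsto_atTop_atTop.mpr
    intro b
    exact ⟨b, fun a ha => le_trans ha (by nlinarith)⟩
  have haux2 : Tendsto (fun N : ℕ => n * N) atTop atTop := by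
    apply tendsto_atTop_atTop.mpr
    intro b
    exact ⟨b, fun a ha => le_trans ha (by nlinarith)⟩
  have hA : Tendsto (fun N : ℕ => (harmonic (2 * (n * N)) : ℝ) - Real.log ((2 * (n * N) : ℕ) : ℝ))
      atTop (𝓝 γ) := Real.tendsto_harmonic_sub_log.comp haux
  have hB : Tendsto (fun N : ℕ => (harmonic (n * N) : ℝ) - Real.log ((n * N : ℕ) : ℝ))
      atTop (𝓝 γ) := Real.tendsto_harmonic_sub_log.comp haux2
  have h3 : Tendsto (fun N : ℕ =>
      (n:ℝ) * Real.log N - 2 * n * (harmonic (2 * (n * N)) : ℝ) + n * (harmonic (n * N) : ℝ))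
      atTop (𝓝 (-(n:ℝ) * (γ + Real.log (4 * n)))) := by
    have hE : Tendsto (fun N : ℕ =>
        (-2 * n) * ((harmonic (2 * (n * N)) : ℝ) - Real.log ((2 * (n * N) : ℕ) : ℝ))
          + n * ((harmonic (n * N) : ℝ) - Real.log ((n * N : ℕ) : ℝ)) - n * Real.log (4 * n))
        atTop (𝓝 ((-2 * n) * γ + n * γ - n * Real.log (4 * n))) :=
      Tendsto.sub ((hA.const_mul _).add (hB.const_mul _)) tendsto_const_nhds
    have : (-2 * (n:ℝ)) * γ + n * γ - n * Real.log (4 * n) = -(n:ℝ) * (γ + Real.log (4 * n)) := by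
      ring
    rw [this] at hE
    apply hE.congr'
    filter_upwards [eventually_ge_atTop 1] with N hN
    have hN' : (1:ℝ) ≤ N := by exact_mod_cast hN
    have l1 : Real.log ((2 * (n * N) : ℕ) : ℝ) = Real.log 2 + Real.log n + Real.log N := by
      push_cast
      rw [Real.log_mul (by positivity) (by positivity), Real.log_mul (by positivity)
        (by positivity)]
      ring
    have l2 : Real.log ((n * N : ℕ) : ℝ) = Real.log n + Real.log N := by
      push_cast
      rw [Real.log_mul (by positivity) (by positivity)]
    have l3 : Real.log (4 * (n:ℝ)) = 2 * Real.log 2 + Real.log n := by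
      rw [show (4:ℝ) = 2 ^ 2 by norm_num, Real.log_mul (by positivity) (by positivity),
        Real.log_pow]
      push_cast; ring
    rw [l1, l2, l3]
    ring
  -- conclude
  have := tendsto_nhds_unique (h1.congr fun N => h2 N) h3
  rw [this]
lemma digamma_reflection {x : ℝ} (h0 : 0 < x) (h1 : x < 1) :
    digamma (1 - x) = digamma x + π * Real.cos (π * x) / Real.sin (π * x) := by
  have hπ := Real.pi_pos
  have hs : 0 < Real.sin (π * x) := by
    apply Real.sin_pos_of_pos_of_lt_pi (by positivity)
    nlinarith
  have hg2 : HasDerivAt (fun s : ℝ => Real.log (Real.Gamma (1 - s)))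
      (digamma (1 - x) * (-1)) x :=
    (hasDerivAt_logGamma (by linarith)).comp x ((hasDerivAt_id x).const_sub 1)
  have hg : HasDerivAt (fun s : ℝ => Real.log (Real.Gamma s) + Real.log (Real.Gamma (1 - s)))
      (digamma x + digamma (1 - x) * (-1)) x := (hasDerivAt_logGamma h0).add hg2
  have hsin : HasDerivAt (fun s : ℝ => Real.sin (π * s)) (Real.cos (π * x) * (π * 1)) x :=
    (Real.hasDerivAt_sin (π * x)).comp x ((hasDerivAt_id x).const_mul π)
  have hh : HasDerivAt (fun s : ℝ => Real.log π - Real.log (Real.sin (π * s)))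
      (-(Real.cos (π * x) * (π * 1) / Real.sin (π * x))) x := by
    have := (hsin.log hs.ne').const_sub (Real.log π)
    simpa using this
  have heq : (fun s : ℝ => Real.log (Real.Gamma s) + Real.log (Real.Gamma (1 - s))) =ᶠ[𝓝 x]
      (fun s : ℝ => Real.log π - Real.log (Real.sin (π * s))) := by
    filter_upwards [isOpen_Ioo.mem_nhds (⟨h0, h1⟩ : x ∈ Ioo (0:ℝ) 1)] with s hsm
    obtain ⟨hs0, hs1⟩ := hsm
    have hsin' : 0 < Real.sin (π * s) := by
      apply Real.sin_pos_of_pos_of_lt_pi (by positivity)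
      nlinarith
    have hΓ1 : 0 < Real.Gamma s := Real.Gamma_pos_of_pos hs0
    have hΓ2 : 0 < Real.Gamma (1 - s) := Real.Gamma_pos_of_pos (by linarith)
    rw [← Real.log_mul hΓ1.ne' hΓ2.ne', Real.Gamma_mul_Gamma_one_sub,
      Real.log_div (by positivity) hsin'.ne']
  have huniq := hg.unique (hh.congr_of_eventuallyEq heq)
  field_simp at huniq ⊢
  linarith

noncomputable def cc (n k : ℕ) : ℝ := Real.cos (k * π / (2 * n)) / Real.sin (k * π / (2 * n))
noncomputable def DD (n j : ℕ) : ℝ := Real.cos (j * π / n) / Real.sin (j * π / n)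

lemma sum_even_odd (v : ℕ → ℝ) (n : ℕ) :
    ∑ k ∈ range (2 * n), v k = ∑ l ∈ range n, v (2 * l) + ∑ l ∈ range n, v (2 * l + 1) := by
  induction n with
  | zero => simp
  | succ m ih =>
      rw [show 2 * (m + 1) = (2 * m) + 1 + 1 by ring, Finset.sum_range_succ,
        Finset.sum_range_succ, Finset.sum_range_succ (fun l => v (2 * l)),
        Finset.sum_range_succ (fun l => v (2 * l + 1)), ih]
      ring

lemma reflect_Ico (g : ℕ → ℝ) (n : ℕ) :
    ∑ k ∈ Finset.Ico 1 n, g (n - k) = ∑ k ∈ Finset.Ico 1 n, g k := by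
  refine Finset.sum_nbij' (fun k => n - k) (fun k => n - k) ?_ ?_ ?_ ?_ ?_ <;>
    intro a ha <;> simp only [Finset.mem_Ico] at * <;> first | omega | (congr 1; omega)

lemma reflect_Ico_upper (g : ℕ → ℝ) (n : ℕ) :
    ∑ k ∈ Finset.Ico (n + 1) (2 * n), g k = ∑ k ∈ Finset.Ico 1 n, g (2 * n - k) := by
  refine Finset.sum_nbij' (fun k => 2 * n - k) (fun k => 2 * n - k) ?_ ?_ ?_ ?_ ?_ <;>
    intro a ha <;> simp only [Finset.mem_Ico] at * <;> first | omega | (congr 1; omega)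

lemma cc_antisym {n k : ℕ} (hn : 0 < n) (hk : k ≤ 2 * n) : cc n (2 * n - k) = -cc n k := by
  have hn' : (0:ℝ) < n := by exact_mod_cast hn
  have hcast : ((2 * n - k : ℕ) : ℝ) = 2 * n - k := by
    push_cast [hk]; ring
  have hang : ((2 * n - k : ℕ) : ℝ) * π / (2 * n) = π - k * π / (2 * n) := by
    rw [hcast]; field_simp
  rw [cc, hang, Real.cos_pi_sub, Real.sin_pi_sub, neg_div, cc]

lemma DD_antisym {n j : ℕ} (hn : 0 < n) (hj : j ≤ n) : DD n (n - j) = -DD n j := by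
  have hn' : (0:ℝ) < n := by exact_mod_cast hn
  have hcast : ((n - j : ℕ) : ℝ) = n - j := by push_cast [hj]; ring
  have hang : ((n - j : ℕ) : ℝ) * π / n = π - j * π / n := by
    rw [hcast]; field_simp
  rw [DD, hang, Real.cos_pi_sub, Real.sin_pi_sub, neg_div, DD]

lemma cc_n {n : ℕ} (hn : 0 < n) : cc n n = 0 := by
  have hn' : (0:ℝ) < n := by exact_mod_cast hn
  have : (n:ℝ) * π / (2 * n) = π / 2 := by field_simp
  rw [cc, this, Real.cos_pi_div_two, zero_div]

lemma cc_even {n : ℕ} (hn : 0 < n) (j : ℕ) : cc n (2 * j) = DD n j := by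
  have hn' : (0:ℝ) < n := by exact_mod_cast hn
  have : ((2 * j : ℕ):ℝ) * π / (2 * n) = j * π / n := by push_cast; field_simp
  rw [cc, this, DD]

lemma angle_pos_lt {n k : ℕ} (hn : 0 < n) (hk1 : 1 ≤ k) (hk2 : k < n) :
    0 < (k:ℝ) * π / (2 * n) ∧ (k:ℝ) * π / (2 * n) < π / 2 := by
  have hn' : (0:ℝ) < n := by exact_mod_cast hn
  have hπ := Real.pi_pos
  have hk1' : (1:ℝ) ≤ k := by exact_mod_cast hk1
  have hk2' : (k:ℝ) < n := by exact_mod_cast hk2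
  constructor
  · positivity
  · rw [div_lt_div_iff₀ (by positivity) (by norm_num)]
    nlinarith


lemma csc_id {t : ℝ} (h1 : 0 < Real.sin t) (h2 : 0 < Real.cos t) :
    (Real.sin (2*t))⁻¹ = (Real.cos t/Real.sin t + Real.sin t/Real.cos t)/2 := by
  rw [Real.sin_two_mul]
  have h := Real.sin_sq_add_cos_sq t
  field_simp
  linear_combination -h

lemma cot_sub_tan {t : ℝ} (h1 : 0 < Real.sin t) (h2 : 0 < Real.cos t) :
    Real.cos t/Real.sin t - Real.sin t/Real.cos t = 2 * (Real.cos (2*t)/Real.sin (2*t)) := by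
  rw [Real.sin_two_mul, Real.cos_two_mul]
  have h := Real.sin_sq_add_cos_sq t
  field_simp
  linear_combination -h

lemma csc_eq {n k : ℕ} (hn : 0 < n) (hk1 : 1 ≤ k) (hk2 : k < n) :
    (Real.sin (π * k / n))⁻¹ = (cc n k + cc n (n - k)) / 2 := by
  have hn' : (0:ℝ) < n := by exact_mod_cast hn
  obtain ⟨ht0, ht1⟩ := angle_pos_lt hn hk1 hk2
  set t := (k:ℝ) * π / (2 * n) with htdef
  have hsin : 0 < Real.sin t := Real.sin_pos_of_pos_of_lt_pi ht0 (by linarith [Real.pi_pos])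
  have hcos : 0 < Real.cos t := Real.cos_pos_of_mem_Ioo ⟨by linarith [Real.pi_pos], ht1⟩
  have hcast : ((n - k : ℕ) : ℝ) = n - k := by push_cast [le_of_lt hk2]; ring
  have hang : ((n - k : ℕ) : ℝ) * π / (2 * n) = π / 2 - t := by
    rw [hcast, htdef]; field_simp
  have hang2 : π * k / n = 2 * t := by rw [htdef]; field_simp
  rw [cc, cc, hang, Real.cos_pi_div_two_sub, Real.sin_pi_div_two_sub, hang2]
  exact csc_id hsin hcos

lemma cc_sub_eq {n k : ℕ} (hn : 0 < n) (hk1 : 1 ≤ k) (hk2 : k < n) :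
    cc n k - cc n (n - k) = 2 * DD n k := by
  have hn' : (0:ℝ) < n := by exact_mod_cast hn
  obtain ⟨ht0, ht1⟩ := angle_pos_lt hn hk1 hk2
  set t := (k:ℝ) * π / (2 * n) with htdef
  have hsin : 0 < Real.sin t := Real.sin_pos_of_pos_of_lt_pi ht0 (by linarith [Real.pi_pos])
  have hcos : 0 < Real.cos t := Real.cos_pos_of_mem_Ioo ⟨by linarith [Real.pi_pos], ht1⟩
  have hsin2 : 0 < Real.sin (2 * t) := by rw [Real.sin_two_mul]; positivity
  have hcast : ((n - k : ℕ) : ℝ) = n - k := by push_cast [le_of_lt hk2]; ring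
  have hang : ((n - k : ℕ) : ℝ) * π / (2 * n) = π / 2 - t := by
    rw [hcast, htdef]; field_simp
  have hang2 : (k:ℝ) * π / n = 2 * t := by rw [htdef]; field_simp
  rw [cc, cc, DD, hang, Real.cos_pi_div_two_sub, Real.sin_pi_div_two_sub, hang2]
  exact cot_sub_tan hsin hcos

lemma sumD {n : ℕ} (hn : 0 < n) : ∑ j ∈ Finset.Ico 1 n, DD n j = 0 := by
  have h := reflect_Ico (fun j => DD n j) n
  have h2 : ∀ j ∈ Finset.Ico 1 n, DD n (n - j) = -DD n j := by
    intro j hj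
    rw [Finset.mem_Ico] at hj
    exact DD_antisym hn (by omega)
  rw [Finset.sum_congr rfl h2, Finset.sum_neg_distrib] at h
  linarith

lemma sumS2 {n : ℕ} (hn : 0 < n) :
    ∑ k ∈ Finset.Ico 1 n, (2 * (k:ℝ) - n) * cc n k
      = 2 * ∑ j ∈ Finset.Ico 1 n, (j:ℝ) * DD n j := by
  have refl := reflect_Ico (fun k => (2 * (k:ℝ) - n) * cc n k) n
  have key : ∀ k ∈ Finset.Ico 1 n,
      (2 * ((n - k : ℕ):ℝ) - n) * cc n (n - k)
        = ((n:ℝ) - 2 * k) * cc n k - ((n:ℝ) - 2 * k) * (2 * DD n k) := by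
    intro k hk
    rw [Finset.mem_Ico] at hk
    have hc : ((n - k : ℕ):ℝ) = (n:ℝ) - k := by push_cast [le_of_lt hk.2]; ring
    have hsub := cc_sub_eq hn hk.1 hk.2
    rw [hc]
    linear_combination (2 * (k:ℝ) - n) * hsub
  rw [Finset.sum_congr rfl key] at refl
  rw [Finset.sum_sub_distrib] at refl
  have expand : ∑ k ∈ Finset.Ico 1 n, ((n:ℝ) - 2 * k) * (2 * DD n k)
      = 2 * (n:ℝ) * (∑ j ∈ Finset.Ico 1 n, DD n j)
        - 4 * ∑ j ∈ Finset.Ico 1 n, (j:ℝ) * DD n j := by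
    rw [Finset.mul_sum, Finset.mul_sum, ← Finset.sum_sub_distrib]
    exact Finset.sum_congr rfl fun k _ => by ring
  rw [expand, sumD hn] at refl
  have hneg : ∑ k ∈ Finset.Ico 1 n, ((n:ℝ) - 2 * k) * cc n k
      = -∑ k ∈ Finset.Ico 1 n, (2 * (k:ℝ) - n) * cc n k := by
    rw [← Finset.sum_neg_distrib]
    exact Finset.sum_congr rfl fun k _ => by ring
  rw [hneg] at refl
  linarith

lemma sumT {n : ℕ} (hn : 0 < n) :
    ∑ k ∈ range (2 * n), (k:ℝ) * cc n k
      = ∑ k ∈ Finset.Ico 1 n, (2 * (k:ℝ) - 2 * n) * cc n k := by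
  rw [Finset.range_eq_Ico, Finset.sum_eq_sum_Ico_succ_bot (by omega : 0 < 2 * n)]
  rw [← Finset.sum_Ico_consecutive _ (by omega : 1 ≤ n) (by omega : n ≤ 2 * n)]
  rw [Finset.sum_eq_sum_Ico_succ_bot (by omega : n < 2 * n)]
  rw [reflect_Ico_upper (fun k => (k:ℝ) * cc n k) n]
  have h0 : (↑(0:ℕ):ℝ) * cc n 0 = 0 := by simp
  have hmid : ((n:ℕ):ℝ) * cc n n = 0 := by rw [cc_n hn]; ring
  have hrest : ∀ k ∈ Finset.Ico 1 n,
      ((2 * n - k : ℕ):ℝ) * cc n (2 * n - k) = (2 * (n:ℝ) - k) * (-cc n k) := by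
    intro k hk
    rw [Finset.mem_Ico] at hk
    have hkle : k ≤ 2 * n := by omega
    have hc : ((2 * n - k : ℕ):ℝ) = 2 * (n:ℝ) - k := by push_cast [hkle]; ring
    rw [hc, cc_antisym hn hkle]
  rw [Finset.sum_congr rfl hrest, h0, hmid, zero_add, zero_add, ← Finset.sum_add_distrib]
  exact Finset.sum_congr rfl fun k _ => by ring

lemma sum_cc_odd {n : ℕ} (hn : 0 < n) : ∑ l ∈ range n, cc n (2 * l + 1) = 0 := by
  have h := Finset.sum_range_reflect (fun l => cc n (2 * l + 1)) n
  have h2 : ∀ l ∈ range n, cc n (2 * (n - 1 - l) + 1) = -cc n (2 * l + 1) := by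
    intro l hl
    rw [Finset.mem_range] at hl
    rw [show 2 * (n - 1 - l) + 1 = 2 * n - (2 * l + 1) by omega]
    exact cc_antisym hn (by omega)
  rw [Finset.sum_congr rfl h2, Finset.sum_neg_distrib] at h
  linarith

lemma sumS {n : ℕ} (hn : 0 < n) :
    ∑ l ∈ range n, (2 * (l:ℝ) + 1) * cc n (2 * l + 1)
      = -(n:ℝ) * ∑ k ∈ Finset.Ico 1 n, cc n k := by
  have hsplit := sum_even_odd (fun k => (k:ℝ) * cc n k) n
  have hE : ∑ l ∈ range n, ((2 * l : ℕ):ℝ) * cc n (2 * l)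
      = 2 * ∑ j ∈ Finset.Ico 1 n, (j:ℝ) * DD n j := by
    have : ∀ l ∈ range n, ((2 * l : ℕ):ℝ) * cc n (2 * l) = 2 * ((l:ℝ) * DD n l) := by
      intro l _
      rw [cc_even hn]; push_cast; ring
    rw [Finset.sum_congr rfl this, ← Finset.mul_sum]
    congr 1
    rw [Finset.range_eq_Ico, Finset.sum_eq_sum_Ico_succ_bot hn]
    simp
  have hO : ∑ l ∈ range n, ((2 * l + 1 : ℕ):ℝ) * cc n (2 * l + 1)
      = ∑ l ∈ range n, (2 * (l:ℝ) + 1) * cc n (2 * l + 1) := by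
    exact Finset.sum_congr rfl fun l _ => by push_cast; ring
  rw [hE, hO, sumT hn] at hsplit
  have hT : ∑ k ∈ Finset.Ico 1 n, (2 * (k:ℝ) - 2 * n) * cc n k
      = ∑ k ∈ Finset.Ico 1 n, (2 * (k:ℝ) - n) * cc n k
        - (n:ℝ) * ∑ k ∈ Finset.Ico 1 n, cc n k := by
    rw [Finset.mul_sum, ← Finset.sum_sub_distrib]
    exact Finset.sum_congr rfl fun k _ => by ring
  rw [hT, sumS2 hn] at hsplit
  linarith

lemma sumS1 {n : ℕ} (hn : 0 < n) :
    ∑ l ∈ Finset.Ico 1 n, (Real.sin (π * l / n))⁻¹ = ∑ k ∈ Finset.Ico 1 n, cc n k := by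
  have h1 : ∀ k ∈ Finset.Ico 1 n, (Real.sin (π * k / n))⁻¹ = (cc n k + cc n (n - k)) / 2 := by
    intro k hk
    rw [Finset.mem_Ico] at hk
    exact csc_eq hn hk.1 hk.2
  rw [Finset.sum_congr rfl h1]
  have h2 : ∑ k ∈ Finset.Ico 1 n, (cc n k + cc n (n - k)) / 2
      = (∑ k ∈ Finset.Ico 1 n, cc n k + ∑ k ∈ Finset.Ico 1 n, cc n (n - k)) / 2 := by
    rw [← Finset.sum_add_distrib, Finset.sum_div]
  rw [h2, reflect_Ico (fun k => cc n k) n]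
  ring

lemma trig_main {n : ℕ} (hn : 0 < n) :
    ∑ l ∈ range n, (1 - (2 * (l:ℝ) + 1) / n) * cc n (2 * l + 1)
      = ∑ l ∈ Finset.Ico 1 n, (Real.sin (π * l / n))⁻¹ := by
  have hn' : (0:ℝ) < n := by exact_mod_cast hn
  have h1 : ∀ l ∈ range n, (1 - (2 * (l:ℝ) + 1) / n) * cc n (2 * l + 1)
      = cc n (2 * l + 1) - ((n:ℝ))⁻¹ * ((2 * (l:ℝ) + 1) * cc n (2 * l + 1)) := by
    intro l _
    field_simp
  rw [Finset.sum_congr rfl h1, Finset.sum_sub_distrib, sum_cc_odd hn, ← Finset.mul_sum,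
    sumS hn, sumS1 hn]
  field_simp
  ring

theorem csc_sum_digamma (n : ℕ) (hn : 2 ≤ n) :
    ∑ l ∈ Finset.Ico 1 n, (Real.sin (π * l / n))⁻¹ =
      (2 * n / π) * (Real.eulerMascheroniConstant + Real.log (4 * n)) +
        (4 / π) * ∑ l ∈ Finset.range n,
          ((2 * (l : ℝ) + 1) / (2 * n)) * digamma ((2 * l + 1) / (2 * n)) := by
  have hn0 : 0 < n := by omega
  have hn' : (0:ℝ) < n := by exact_mod_cast hn0
  have hπ := Real.pi_pos
  set γ := Real.eulerMascheroniConstant with hγ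
  set x : ℕ → ℝ := fun l => (2 * (l:ℝ) + 1) / (2 * n) with hxdef
  set ψ : ℕ → ℝ := fun l => digamma (x l) with hψdef
  -- the key pairing identity
  have hrefl := Finset.sum_range_reflect (fun l => (2 * x l - 1) * ψ l) n
  have hpoint : ∀ l ∈ range n, (2 * x (n - 1 - l) - 1) * ψ (n - 1 - l)
      = (1 - 2 * x l) * ψ l + (1 - 2 * x l) * (π * cc n (2 * l + 1)) := by
    intro l hl
    rw [Finset.mem_range] at hl
    have h2l : (2 * (l:ℝ) + 1) < 2 * n := by
      have : (l:ℝ) + 1 ≤ n := by exact_mod_cast hl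
      linarith
    have hx0 : 0 < x l := by rw [hxdef]; positivity
    have hx1 : x l < 1 := by
      rw [hxdef, div_lt_one (by positivity)]
      exact h2l
    have hc : ((n - 1 - l : ℕ):ℝ) = (n:ℝ) - 1 - l := by
      have h1 : l ≤ n - 1 := by omega
      have h2 : 1 ≤ n := by omega
      push_cast [h1, h2]
      ring
    have harg : x (n - 1 - l) = 1 - x l := by
      rw [hxdef]
      simp only []
      rw [hc]
      field_simp
      ring
    have hcot : π * Real.cos (π * x l) / Real.sin (π * x l) = π * cc n (2 * l + 1) := by
      rw [cc]
      have hang : ((2 * l + 1 : ℕ):ℝ) * π / (2 * n) = π * x l := by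
        rw [hxdef]; push_cast; field_simp
      rw [hang, mul_div_assoc]
    have hψr : ψ (n - 1 - l) = ψ l + π * cc n (2 * l + 1) := by
      rw [hψdef]
      simp only []
      rw [harg, digamma_reflection hx0 hx1, hcot]
    rw [hψr, harg]
    ring
  rw [Finset.sum_congr rfl hpoint, Finset.sum_add_distrib] at hrefl
  have hneg : ∑ l ∈ range n, (1 - 2 * x l) * ψ l
      = -∑ l ∈ range n, (2 * x l - 1) * ψ l := by
    rw [← Finset.sum_neg_distrib]
    exact Finset.sum_congr rfl fun l _ => by ring
  rw [hneg] at hrefl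
  -- so  ∑ (2 x - 1) ψ = (1/2) ∑ (1 - 2x) π cot
  -- identify the cotangent sum with the cosecant sum
  have hwt : ∀ l ∈ range n, (1 - 2 * x l) * (π * cc n (2 * l + 1))
      = π * ((1 - (2 * (l:ℝ) + 1) / n) * cc n (2 * l + 1)) := by
    intro l _
    have : 1 - 2 * x l = 1 - (2 * (l:ℝ) + 1) / n := by
      rw [hxdef]
      simp only []
      field_simp
    rw [this]
    ring
  have hcotsum : ∑ l ∈ range n, (1 - 2 * x l) * (π * cc n (2 * l + 1))
      = π * ∑ l ∈ Finset.Ico 1 n, (Real.sin (π * l / n))⁻¹ := by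
    rw [Finset.sum_congr rfl hwt, ← Finset.mul_sum, trig_main hn0]
  rw [hcotsum] at hrefl
  -- Gauss digamma sum
  have hgauss : ∑ l ∈ range n, ψ l = -(n:ℝ) * (γ + Real.log (4 * n)) :=
    gauss_digamma_sum n hn0
  -- express ∑ (2x-1)ψ via W and hgauss
  have hW : ∑ l ∈ range n, (2 * x l - 1) * ψ l
      = 2 * (∑ l ∈ range n, x l * ψ l) - ∑ l ∈ range n, ψ l := by
    rw [Finset.mul_sum, ← Finset.sum_sub_distrib]
    exact Finset.sum_congr rfl fun l _ => by ring
  rw [hW, hgauss] at hrefl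
  -- final algebra
  have hfin : π * ∑ l ∈ Finset.Ico 1 n, (Real.sin (π * l / n))⁻¹
      = 2 * (2 * (∑ l ∈ range n, x l * ψ l) - -(n:ℝ) * (γ + Real.log (4 * n))) := by
    linarith
  have hsum_eq : ∑ l ∈ Finset.range n, ((2 * (l : ℝ) + 1) / (2 * n)) * digamma ((2 * l + 1) / (2 * n))
      = ∑ l ∈ range n, x l * ψ l := rfl
  rw [hsum_eq]
  field_simp at hfin ⊢
  linarith
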